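/- arXiv:1610.00796 — 3 statements merged into one kernel-verified Lean document; each statement's English description precedes it below -/
import Mathlib

section
/- Let (X, T) be a measurable dynamical system with invariant probability measure ν, and let φ: X → ℝ be measurable with Birkhoff averages (1/n)∑_{i=0}^{n-1} φ(T^i x) converging to λ < 0 at a point x. Then there exists j ≥ 0 such that the point x' = T^j x satisfies ∑_{i=0}^{n-1} φ(T^i x') < (3λ/4)·n for every n ≥ 1. -/
open Filter

/-- Hyperbolic time claim (Lemma 4.6): if the Birkhoff averages of `φ` at `x` converge to
`l < 0`, then some iterate `x' = T^j x` has all Birkhoff sums below `(3l/4) n`. -/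
theorem stmt0 {X : Type*} (T : X → X) (φ : X → ℝ) (x : X) (l : ℝ) (hl : l < 0)
    (hbirk : Tendsto (fun n : ℕ => (∑ i ∈ Finset.range n, φ (T^[i] x)) / n) atTop (nhds l)) :
    ∃ j : ℕ, ∀ n : ℕ, 1 ≤ n →
      (∑ i ∈ Finset.range n, φ (T^[i] (T^[j] x))) < (3 * l / 4) * n := by
  by_contra hcon
  push_neg at hcon
  set S : ℕ → ℝ := fun n => ∑ i ∈ Finset.range n, φ (T^[i] x) with hS
  have key : ∀ j : ℕ, ∃ n : ℕ, 1 ≤ n ∧ (3 * l / 4) * n ≤ S (j + n) - S j := by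
    intro j
    obtain ⟨n, hn1, hn2⟩ := hcon j
    refine ⟨n, hn1, ?_⟩
    have hsum : S (j + n) = S j + ∑ i ∈ Finset.range n, φ (T^[i] (T^[j] x)) := by
      simp only [hS, Finset.sum_range_add]
      congr 1
      refine Finset.sum_congr rfl fun i _ => ?_
      rw [← Function.iterate_add_apply, Nat.add_comm]
    rw [hsum]
    linarith
  -- build the concatenated sequence
  let c : ℕ → ℕ := fun j => (key j).choose
  have hc1 : ∀ j, 1 ≤ c j := fun j => (key j).choose_spec.1
  have hc2 : ∀ j, (3 * l / 4) * (c j) ≤ S (j + c j) - S j := fun j => (key j).choose_spec.2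
  let f : ℕ → ℕ := fun k => Nat.rec (motive := fun _ => ℕ) 0 (fun _ jk => jk + c jk) k
  have hf0 : f 0 = 0 := rfl
  have hfs : ∀ k, f (k + 1) = f k + c (f k) := fun k => rfl
  have hfk : ∀ k, k ≤ f k := by
    intro k
    induction k with
    | zero => simp [hf0]
    | succ k ih =>
      rw [hfs]
      have := hc1 (f k)
      omega
  have hSf : ∀ k : ℕ, (3 * l / 4) * (↑(f k) : ℝ) ≤ S (f k) := by
    intro k
    induction k with
    | zero => simp [hf0, hS]
    | succ k ih =>
      have h2 := hc2 (f k)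
      rw [hfs]
      push_cast
      linarith
  have hftop : Tendsto f atTop atTop :=
    tendsto_atTop_mono hfk tendsto_id
  have hsub : Tendsto (fun k => S (f k) / (f k : ℝ)) atTop (nhds l) :=
    hbirk.comp hftop
  have hge : 3 * l / 4 ≤ l := by
    refine ge_of_tendsto hsub (eventually_atTop.2 ⟨1, fun k hk => ?_⟩)
    have hfpos : (0 : ℝ) < (f k : ℝ) := by
      have h1 := hfk k
      have : 1 ≤ f k := le_trans hk h1
      exact_mod_cast this
    rw [le_div_iff₀ hfpos]
    exact hSf k
  linarith
end

section
/- Let (s_j)_{j≥1} be a sequence of positive-integer-valued random variables on a probability space such that for constants C₀ > 0, ρ₀ < 1 one has, for every i and every k₁,…,k_i, P(s₁=k₁,…,s_i=k_i) ≤ ∏_{j=1}^{i} C₀ρ₀^{k_j}, and such that P(the process survives i runs) ≤ (1−a)^i for some a > 0. Set R = ∑_{j=1}^{K} s_j where K is the (random) number of runs. Then there exist C₂ > 0 and ρ₂ < 1 such that P(R = n) ≤ C₂·ρ₂^n for all n; in particular P(R > N) ≤ C₂'·ρ₂^N. -/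
open MeasureTheory

theorem aux_geom (r : ℝ) (h0 : 0 ≤ r) (h1 : r < 1) (n : ℕ) :
    ∑ k ∈ Finset.Icc 1 n, r ^ k ≤ (1 - r)⁻¹ := by
  calc ∑ k ∈ Finset.Icc 1 n, r ^ k ≤ ∑' k : ℕ, r ^ k := by
        apply Summable.sum_le_tsum _ (fun k _ => by positivity)
        exact summable_geometric_of_lt_one h0 h1
    _ = (1 - r)⁻¹ := tsum_geometric_of_lt_one h0 h1

theorem aux_cover {Ω : Type*} [MeasurableSpace Ω] (μ : Measure Ω)
    (s : ℕ → Ω → ℕ) (K : Ω → ℕ) (R : Ω → ℕ)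
    (C₀ ρ₀ ρ₁ : ℝ) (hC₀ : 0 < C₀) (hρ₀0 : 0 < ρ₀) (hρ₀ρ₁ : ρ₀ ≤ ρ₁) (hρ₁1 : ρ₁ < 1)
    (hpos : ∀ j ω, 1 ≤ s j ω)
    (hjoint : ∀ i : ℕ, 1 ≤ i → ∀ k : ℕ → ℕ,
      μ {ω | ∀ j ∈ Finset.Icc 1 i, s j ω = k j}
        ≤ ENNReal.ofReal (∏ j ∈ Finset.Icc 1 i, C₀ * ρ₀ ^ k j))
    (hR : ∀ ω, R ω = ∑ j ∈ Finset.Icc 1 (K ω), s j ω)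
    (i n : ℕ) (hi : 1 ≤ i) :
    μ {ω | R ω = n ∧ K ω = i}
      ≤ ENNReal.ofReal ((ρ₀ / ρ₁) ^ n * (C₀ / (1 - ρ₁)) ^ i) := by
  have hρ₁0 : 0 < ρ₁ := lt_of_lt_of_le hρ₀0 hρ₀ρ₁
  set σ := ρ₀ / ρ₁ with hσ
  set M := C₀ / (1 - ρ₁) with hM
  set V : Finset (Fin i → ℕ) :=
    (Fintype.piFinset fun _ => Finset.Icc 1 n).filter (fun v => ∑ t, v t = n) with hV
  set e : (Fin i → ℕ) → ℕ → ℕ :=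
    fun v j => if h : j - 1 < i then v ⟨j - 1, h⟩ else 0 with he
  -- reindexing fact
  have hre : ∀ (g : ℕ → ℕ), ∑ j ∈ Finset.Icc 1 i, g j = ∑ t : Fin i, g (1 + t.1) := by
    intro g
    rw [← Finset.Ico_add_one_right_eq_Icc, Finset.sum_Ico_eq_sum_range,
        Fin.sum_univ_eq_sum_range (fun t => g (1 + t))]
    simp
  have hei : ∀ v (j : ℕ), j ∈ Finset.Icc 1 i → ∀ h : j - 1 < i, e v j = v ⟨j - 1, h⟩ := by
    intro v j hj h; simp [he, h]
  -- covering
  have hcov : {ω | R ω = n ∧ K ω = i} ⊆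
      ⋃ v ∈ V, {ω | ∀ j ∈ Finset.Icc 1 i, s j ω = e v j} := by
    intro ω ⟨h1, h2⟩
    have hsum : ∑ j ∈ Finset.Icc 1 i, s j ω = n := by rw [← h2, ← hR]; exact h1
    refine Set.mem_biUnion (x := fun t : Fin i => s (1 + t.1) ω) ?_ ?_
    · show (fun t : Fin i => s (1 + t.1) ω) ∈ V
      rw [hV, Finset.mem_filter]
      constructor
      · rw [Fintype.mem_piFinset]
        intro t
        rw [Finset.mem_Icc]
        refine ⟨hpos _ _, ?_⟩
        calc s (1 + t.1) ω ≤ ∑ j ∈ Finset.Icc 1 i, s j ω :=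
              Finset.single_le_sum (f := fun j => s j ω) (fun j _ => Nat.zero_le _)
                (show 1 + t.1 ∈ Finset.Icc 1 i by rw [Finset.mem_Icc]; omega)
          _ = n := hsum
      · exact (hre (fun j => s j ω)).symm.trans hsum
    · intro j hj
      rw [Finset.mem_Icc] at hj
      have hlt : j - 1 < i := by omega
      simp only [he, Set.mem_setOf_eq]
      rw [dif_pos hlt]
      congr 1
      omega
  refine le_trans (measure_mono hcov) ?_
  refine le_trans (measure_biUnion_finset_le V _) ?_
  have hterm : ∀ v ∈ V,
      μ {ω | ∀ j ∈ Finset.Icc 1 i, s j ω = e v j}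
        ≤ ENNReal.ofReal (σ ^ n * ∏ t : Fin i, (C₀ * ρ₁ ^ v t)) := by
    intro v hv
    rw [hV, Finset.mem_filter] at hv
    refine le_trans (hjoint i hi (e v)) (le_of_eq ?_)
    congr 1
    have hsum : ∑ j ∈ Finset.Icc 1 i, e v j = n := by
      rw [hre]
      rw [← hv.2]
      apply Finset.sum_congr rfl
      intro t _
      simp only [he]
      rw [dif_pos (by omega : 1 + t.1 - 1 < i)]
      exact congrArg v (Fin.ext (by simp))
    rw [Finset.prod_mul_distrib, Finset.prod_const, Finset.prod_pow_eq_pow_sum, hsum,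
        Nat.card_Icc]
    have hρ : ρ₀ ^ n = σ ^ n * ρ₁ ^ n := by
      rw [← mul_pow, hσ, div_mul_cancel₀ _ (ne_of_gt hρ₁0)]
    rw [Finset.prod_mul_distrib, Finset.prod_const, Finset.prod_pow_eq_pow_sum, hv.2, hρ]
    ring_nf
    simp
  refine le_trans (Finset.sum_le_sum hterm) ?_
  rw [← ENNReal.ofReal_sum_of_nonneg (fun v _ => by positivity)]
  apply ENNReal.ofReal_le_ofReal
  rw [← Finset.mul_sum]
  have hσn : (0:ℝ) ≤ σ ^ n := by positivity
  apply mul_le_mul_of_nonneg_left _ hσn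
  calc ∑ v ∈ V, ∏ t : Fin i, (C₀ * ρ₁ ^ v t)
      ≤ ∑ v ∈ Fintype.piFinset (fun _ : Fin i => Finset.Icc 1 n),
          ∏ t : Fin i, (C₀ * ρ₁ ^ v t) := by
        apply Finset.sum_le_sum_of_subset_of_nonneg (Finset.filter_subset _ _)
        intro v _ _; positivity
    _ = ∏ t : Fin i, ∑ k ∈ Finset.Icc 1 n, C₀ * ρ₁ ^ k := by
        rw [Finset.prod_univ_sum]
    _ ≤ M ^ i := by
        have hfac : ∑ k ∈ Finset.Icc 1 n, C₀ * ρ₁ ^ k ≤ M := by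
          rw [← Finset.mul_sum, hM, div_eq_mul_inv]
          apply mul_le_mul_of_nonneg_left (aux_geom ρ₁ hρ₁0.le hρ₁1 n) hC₀.le
        calc ∏ t : Fin i, ∑ k ∈ Finset.Icc 1 n, C₀ * ρ₁ ^ k
            ≤ ∏ t : Fin i, M := Finset.prod_le_prod (fun t _ => by positivity)
              (fun t _ => hfac)
          _ = M ^ i := by rw [Finset.prod_const, Finset.card_fin]

theorem aux_pow_rpow (x : ℝ) (hx : 0 < x) (t : ℝ) (i : ℕ) : (x ^ i) ^ t = (x ^ t) ^ i := by
  rw [← Real.rpow_natCast x i, ← Real.rpow_mul hx.le, mul_comm, Real.rpow_mul hx.le,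
    Real.rpow_natCast]

/-- Abstract coupling-time estimate of Section 7.4: geometric tails of the individual runs
and geometric survival probability give an exponential tail for the total coupling time. -/
theorem stmt8 {Ω : Type*} [MeasurableSpace Ω] (μ : Measure Ω) [IsProbabilityMeasure μ]
    (s : ℕ → Ω → ℕ) (K : Ω → ℕ) (R : Ω → ℕ)
    (C₀ ρ₀ a : ℝ) (hC₀ : 0 < C₀) (hρ₀0 : 0 < ρ₀) (hρ₀1 : ρ₀ < 1)
    (ha0 : 0 < a) (ha1 : a < 1)
    (hpos : ∀ j ω, 1 ≤ s j ω)
    (hjoint : ∀ i : ℕ, 1 ≤ i → ∀ k : ℕ → ℕ,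
      μ {ω | ∀ j ∈ Finset.Icc 1 i, s j ω = k j}
        ≤ ENNReal.ofReal (∏ j ∈ Finset.Icc 1 i, C₀ * ρ₀ ^ k j))
    (hsurv : ∀ i : ℕ, μ {ω | i ≤ K ω} ≤ ENNReal.ofReal ((1 - a) ^ i))
    (hR : ∀ ω, R ω = ∑ j ∈ Finset.Icc 1 (K ω), s j ω) :
    ∃ C₂ ρ₂ : ℝ, 0 < C₂ ∧ 0 < ρ₂ ∧ ρ₂ < 1 ∧
      (∀ n : ℕ, μ {ω | R ω = n} ≤ ENNReal.ofReal (C₂ * ρ₂ ^ n)) ∧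
      ∃ C₂' : ℝ, 0 < C₂' ∧ ∀ N : ℕ, μ {ω | N < R ω} ≤ ENNReal.ofReal (C₂' * ρ₂ ^ N) := by
  set b := 1 - a with hbdef
  have hb0 : 0 < b := by simp only [hbdef]; linarith
  have hb1 : b < 1 := by simp only [hbdef]; linarith
  set ρ₁ := (1 + ρ₀) / 2 with hρ₁def
  have hρ₁0 : 0 < ρ₁ := by simp only [hρ₁def]; linarith
  have hρ₁1 : ρ₁ < 1 := by simp only [hρ₁def]; linarith
  have hρ₀ρ₁ : ρ₀ ≤ ρ₁ := by simp only [hρ₁def]; linarith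
  set σ := ρ₀ / ρ₁ with hσdef
  have hσ0 : 0 < σ := div_pos hρ₀0 hρ₁0
  have hσ1 : σ < 1 := (div_lt_one hρ₁0).2 (by simp only [hρ₁def]; linarith)
  set M := C₀ / (1 - ρ₁) with hMdef
  have hM0 : 0 < M := div_pos hC₀ (by linarith)
  set M₁ := max M 2 with hM₁def
  have hMM₁ : M ≤ M₁ := le_max_left _ _
  have hM₁1 : (1:ℝ) < M₁ := lt_of_lt_of_le one_lt_two (le_max_right _ _)
  have hM₁0 : (0:ℝ) < M₁ := lt_trans one_pos hM₁1
  have hlogb : Real.log b < 0 := Real.log_neg hb0 hb1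
  have hlogM₁ : 0 < Real.log M₁ := Real.log_pos hM₁1
  set L := Real.log M₁ - Real.log b with hLdef
  have hL : 0 < L := by simp only [hLdef]; linarith
  set θ := -Real.log b / (2 * L) with hθdef
  have hθ0 : 0 < θ := div_pos (by linarith) (by linarith)
  have hθ1 : θ ≤ 1 := by
    rw [hθdef, div_le_iff₀ (by linarith)]
    simp only [hLdef]; linarith
  set c := Real.exp (Real.log b / 2) with hcdef
  have hc0 : 0 < c := Real.exp_pos _
  have hc1 : c < 1 := by
    rw [hcdef, Real.exp_lt_one_iff]; linarith
  have h1c : 0 < 1 - c := by linarith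
  have hkey : b ^ (1 - θ) * M₁ ^ θ = c := by
    rw [Real.rpow_def_of_pos hb0, Real.rpow_def_of_pos hM₁0, ← Real.exp_add, hcdef]
    congr 1
    have hθL : θ * L = -Real.log b / 2 := by
      rw [hθdef, div_mul_eq_mul_div, mul_comm (2:ℝ) L, ← div_div,
        mul_div_assoc, div_self (ne_of_gt hL), mul_one]
    have hexp : Real.log b * (1 - θ) + Real.log M₁ * θ = Real.log b + θ * L := by
      simp only [hLdef]; ring
    rw [hexp, hθL]; ring
  set ρ₂ := σ ^ θ with hρ₂def
  have hρ₂0 : 0 < ρ₂ := Real.rpow_pos_of_pos hσ0 θ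
  have hρ₂1 : ρ₂ < 1 := Real.rpow_lt_one hσ0.le hσ1 hθ0
  set C₂ := (1 - c)⁻¹ with hC₂def
  have hC₂0 : 0 < C₂ := inv_pos.2 h1c
  have hC₂1 : 1 ≤ C₂ := by
    rw [hC₂def, le_inv_comm₀ one_pos h1c]; linarith
  -- interpolation inequality
  have hinterp : ∀ n i : ℕ, min (b ^ i) (σ ^ n * M₁ ^ i) ≤ c ^ i * ρ₂ ^ n := by
    intro n i
    have hx : (0:ℝ) < b ^ i := pow_pos hb0 i
    have hy : (0:ℝ) < σ ^ n * M₁ ^ i := by positivity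
    have hmin : 0 < min (b ^ i) (σ ^ n * M₁ ^ i) := lt_min hx hy
    have h1 : min (b ^ i) (σ ^ n * M₁ ^ i)
        ≤ (b ^ i) ^ (1 - θ) * (σ ^ n * M₁ ^ i) ^ θ := by
      calc min (b ^ i) (σ ^ n * M₁ ^ i)
          = (min (b ^ i) (σ ^ n * M₁ ^ i)) ^ (1 - θ)
            * (min (b ^ i) (σ ^ n * M₁ ^ i)) ^ θ := by
            rw [← Real.rpow_add hmin]; norm_num
        _ ≤ (b ^ i) ^ (1 - θ) * (σ ^ n * M₁ ^ i) ^ θ := by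
            apply mul_le_mul
              (Real.rpow_le_rpow hmin.le (min_le_left _ _) (by linarith))
              (Real.rpow_le_rpow hmin.le (min_le_right _ _) hθ0.le)
              (Real.rpow_nonneg hmin.le θ) (Real.rpow_nonneg hx.le _)
    refine h1.trans (le_of_eq ?_)
    rw [Real.mul_rpow (by positivity) (by positivity), aux_pow_rpow b hb0,
      aux_pow_rpow σ hσ0, aux_pow_rpow M₁ hM₁0, ← hρ₂def, ← hkey, mul_pow]
    ring
  -- main per-n bound
  have hmain : ∀ n : ℕ, μ {ω | R ω = n} ≤ ENNReal.ofReal (C₂ * ρ₂ ^ n) := by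
    intro n
    rcases Nat.eq_zero_or_pos n with hn | hn
    · subst hn
      calc μ {ω | R ω = 0} ≤ 1 := prob_le_one
        _ ≤ ENNReal.ofReal (C₂ * ρ₂ ^ 0) := by
            rw [pow_zero, mul_one, ← ENNReal.ofReal_one]
            exact ENNReal.ofReal_le_ofReal hC₂1
    · have hdec : {ω | R ω = n} ⊆
          ⋃ i ∈ Finset.range (n + 1), {ω | R ω = n ∧ K ω = i} := by
        intro ω hω
        have hωn : R ω = n := hω
        have hKR : K ω ≤ R ω := by
          rw [hR ω]
          calc K ω = ∑ _j ∈ Finset.Icc 1 (K ω), 1 := by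
                rw [Finset.sum_const, Nat.card_Icc]; simp
            _ ≤ ∑ j ∈ Finset.Icc 1 (K ω), s j ω :=
                Finset.sum_le_sum (fun j _ => hpos j ω)
        refine Set.mem_biUnion (x := K ω) ?_ ⟨hωn, rfl⟩
        show K ω ∈ Finset.range (n + 1)
        rw [Finset.mem_range]; omega
      refine le_trans (measure_mono hdec)
        (le_trans (measure_biUnion_finset_le _ _) ?_)
      have hterm : ∀ i ∈ Finset.range (n + 1),
          μ {ω | R ω = n ∧ K ω = i} ≤ ENNReal.ofReal (c ^ i * ρ₂ ^ n) := by
        intro i _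
        rcases Nat.eq_zero_or_pos i with hi0 | hi1
        · subst hi0
          have hempty : {ω | R ω = n ∧ K ω = 0} = ∅ := by
            ext ω
            simp only [Set.mem_setOf_eq, Set.mem_empty_iff_false, iff_false, not_and]
            intro h1 h2
            rw [hR ω, h2] at h1
            simp at h1
            omega
          rw [hempty, measure_empty]; exact zero_le
        · have hbd1 : μ {ω | R ω = n ∧ K ω = i} ≤ ENNReal.ofReal (b ^ i) := by
            refine le_trans (measure_mono ?_) (hsurv i)
            rintro ω ⟨_, h2⟩
            exact le_of_eq h2.symm
          have hbd2 : μ {ω | R ω = n ∧ K ω = i}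
              ≤ ENNReal.ofReal (σ ^ n * M₁ ^ i) := by
            refine le_trans
              (aux_cover μ s K R C₀ ρ₀ ρ₁ hC₀ hρ₀0 hρ₀ρ₁ hρ₁1 hpos hjoint hR i n hi1) ?_
            apply ENNReal.ofReal_le_ofReal
            exact mul_le_mul_of_nonneg_left (pow_le_pow_left₀ hM0.le hMM₁ i)
              (by positivity)
          have hminb : μ {ω | R ω = n ∧ K ω = i}
              ≤ ENNReal.ofReal (min (b ^ i) (σ ^ n * M₁ ^ i)) := by
            rcases le_total (b ^ i) (σ ^ n * M₁ ^ i) with h | h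
            · rwa [min_eq_left h]
            · rwa [min_eq_right h]
          exact le_trans hminb (ENNReal.ofReal_le_ofReal (hinterp n i))
      refine le_trans (Finset.sum_le_sum hterm) ?_
      rw [← ENNReal.ofReal_sum_of_nonneg (fun i _ => by positivity)]
      apply ENNReal.ofReal_le_ofReal
      rw [← Finset.sum_mul]
      refine mul_le_mul_of_nonneg_right ?_ (pow_nonneg hρ₂0.le n)
      calc ∑ i ∈ Finset.range (n + 1), c ^ i
          ≤ ∑' i : ℕ, c ^ i := Summable.sum_le_tsum _ (fun i _ => by positivity)
            (summable_geometric_of_lt_one hc0.le hc1)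
        _ = C₂ := tsum_geometric_of_lt_one hc0.le hc1
  refine ⟨C₂, ρ₂, hC₂0, hρ₂0, hρ₂1, hmain, C₂ * (1 - ρ₂)⁻¹, mul_pos hC₂0 (inv_pos.2 (by linarith)), fun N => ?_⟩
  have hsub : {ω | N < R ω} ⊆ ⋃ m : ℕ, {ω | R ω = N + 1 + m} := by
    intro ω hω
    have hωN : N < R ω := hω
    exact Set.mem_iUnion.2 ⟨R ω - (N + 1), by simp only [Set.mem_setOf_eq]; omega⟩
  refine le_trans (measure_mono hsub) (le_trans (measure_iUnion_le _) ?_)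
  have hle : ∀ m : ℕ, μ {ω | R ω = N + 1 + m}
      ≤ ENNReal.ofReal (C₂ * ρ₂ ^ (N + 1 + m)) := fun m => hmain _
  refine le_trans (ENNReal.tsum_le_tsum hle) ?_
  have hsummable : Summable (fun m : ℕ => C₂ * ρ₂ ^ (N + 1 + m)) := by
    refine ((summable_geometric_of_lt_one hρ₂0.le hρ₂1).mul_left
      (C₂ * ρ₂ ^ (N + 1))).congr fun m => ?_
    rw [pow_add]; ring
  rw [← ENNReal.ofReal_tsum_of_nonneg (fun m => by positivity) hsummable]
  apply ENNReal.ofReal_le_ofReal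
  have htsum : ∑' m : ℕ, C₂ * ρ₂ ^ (N + 1 + m) = C₂ * ρ₂ ^ (N + 1) * (1 - ρ₂)⁻¹ := by
    calc ∑' m : ℕ, C₂ * ρ₂ ^ (N + 1 + m)
        = ∑' m : ℕ, (C₂ * ρ₂ ^ (N + 1)) * ρ₂ ^ m := by
          congr 1; funext m; rw [pow_add]; ring
      _ = (C₂ * ρ₂ ^ (N + 1)) * ∑' m : ℕ, ρ₂ ^ m := tsum_mul_left
      _ = C₂ * ρ₂ ^ (N + 1) * (1 - ρ₂)⁻¹ := by
          rw [tsum_geometric_of_lt_one hρ₂0.le hρ₂1]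
  rw [htsum]
  have hpw : ρ₂ ^ (N + 1) ≤ ρ₂ ^ N := by
    rw [pow_succ]
    exact mul_le_of_le_one_right (pow_nonneg hρ₂0.le N) hρ₂1.le
  calc C₂ * ρ₂ ^ (N + 1) * (1 - ρ₂)⁻¹ = C₂ * (1 - ρ₂)⁻¹ * ρ₂ ^ (N + 1) := by ring
    _ ≤ C₂ * (1 - ρ₂)⁻¹ * ρ₂ ^ N :=
        mul_le_mul_of_nonneg_left hpw
          (mul_nonneg hC₂0.le (inv_pos.2 (by linarith : (0:ℝ) < 1 - ρ₂)).le)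
end

section
/- Let T: X → X and suppose a family of probability measures {ν_x} and a measurable partition assignment satisfy the Jacobian identity: for each x, T_*ν_x = ∑_i c_i(x)·ν_{x_i} where c_i(x) ≥ 0 sum to 1. Suppose for some α > 0 and n₀ there holds ∫ S_{n₀}(φ) dν_x ≤ −n₀α/2 for all x, where S_n(φ) = ∑_{k<n} φ∘T^k. Then for every k ≥ 1 and all x, ∫ S_{k n₀}(φ) dν_x ≤ −k n₀ α/2, and for every n ≥ 1, ∫ S_n(φ) dν_x ≤ −nα/2 + C₁ with C₁ = n₀(‖φ‖_∞ + α/2). -/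
open MeasureTheory

private lemma stmt10_absle {X : Type*} (T : X → X)
    (φ : X → ℝ) (B : ℝ) (hB : ∀ x, |φ x| ≤ B) (n : ℕ) (z : X) :
    |∑ j ∈ Finset.range n, φ (T^[j] z)| ≤ n * B := by
  calc |∑ j ∈ Finset.range n, φ (T^[j] z)|
      ≤ ∑ j ∈ Finset.range n, |φ (T^[j] z)| := Finset.abs_sum_le_sum_abs _ _
    _ ≤ ∑ j ∈ Finset.range n, B := Finset.sum_le_sum fun j _ => hB _
    _ = n * B := by simp [mul_comm]

private lemma stmt10_meas {X : Type*} [MeasurableSpace X] (T : X → X) (hT : Measurable T)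
    (φ : X → ℝ) (hφ : Measurable φ) (n : ℕ) :
    Measurable (fun z => ∑ j ∈ Finset.range n, φ (T^[j] z)) :=
  Finset.measurable_sum _ (fun j _ => hφ.comp (hT.iterate j))

private lemma stmt10_int {X : Type*} [MeasurableSpace X] (T : X → X) (hT : Measurable T)
    (φ : X → ℝ) (hφ : Measurable φ) (B : ℝ) (hB : ∀ x, |φ x| ≤ B) :
    ∀ n (μ : Measure X), IsFiniteMeasure μ →
      Integrable (fun z => ∑ j ∈ Finset.range n, φ (T^[j] z)) μ := by
  intro n μ hμ
  refine (integrable_const ((n : ℝ) * B)).mono'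
    (stmt10_meas T hT φ hφ n).aestronglyMeasurable
    (Filter.Eventually.of_forall fun z => ?_)
  rw [Real.norm_eq_abs]
  exact stmt10_absle T φ B hB n z

private lemma stmt10_bound {X : Type*} [MeasurableSpace X] (T : X → X)
    (φ : X → ℝ) (B : ℝ) (hB : ∀ x, |φ x| ≤ B) :
    ∀ n (μ : Measure X), IsProbabilityMeasure μ →
      (∫ z, (∑ j ∈ Finset.range n, φ (T^[j] z)) ∂μ) ≤ n * B := by
  intro n μ hμ
  have h := norm_integral_le_of_norm_le_const (μ := μ)
    (f := fun z => ∑ j ∈ Finset.range n, φ (T^[j] z)) (C := (n : ℝ) * B)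
    (Filter.Eventually.of_forall fun z => by
      rw [Real.norm_eq_abs]; exact stmt10_absle T φ B hB n z)
  simp only [measure_univ, probReal_univ, ENNReal.toReal_one, mul_one, Real.norm_eq_abs] at h
  exact le_trans (le_abs_self _) h

/-- Lemma 5.3: from the Markov/Jacobian decomposition of the pushforward of the reference
measures and a one-block negative average, deduce negative averages for all times. -/
theorem stmt10 {X : Type*} [MeasurableSpace X] (T : X → X) (hT : Measurable T)
    (ν : X → Measure X) (hprob : ∀ x, IsProbabilityMeasure (ν x))
    (φ : X → ℝ) (hφ : Measurable φ) (B : ℝ) (hB : ∀ x, |φ x| ≤ B)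
    (α : ℝ) (hα : 0 < α) (n₀ : ℕ) (hn₀ : 1 ≤ n₀)
    (hjac : ∀ x, ∃ (k : ℕ) (c : Fin k → ℝ) (y : Fin k → X),
      (∀ i, 0 ≤ c i) ∧ (∑ i, c i = 1) ∧
      Measure.map (T^[n₀]) (ν x) = ∑ i, ENNReal.ofReal (c i) • ν (y i))
    (hstep : ∀ x, (∫ z, (∑ k ∈ Finset.range n₀, φ (T^[k] z)) ∂(ν x)) ≤ -(n₀ : ℝ) * α / 2) :
    (∀ k : ℕ, 1 ≤ k → ∀ x,
      (∫ z, (∑ j ∈ Finset.range (k * n₀), φ (T^[j] z)) ∂(ν x)) ≤ -((k * n₀ : ℕ) : ℝ) * α / 2) ∧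
    ∀ n : ℕ, 1 ≤ n → ∀ x,
      (∫ z, (∑ j ∈ Finset.range n, φ (T^[j] z)) ∂(ν x))
        ≤ -(n : ℝ) * α / 2 + (n₀ : ℝ) * (B + α / 2) := by
  rcases isEmpty_or_nonempty X with hX | hX
  · exact ⟨fun k _ x => (IsEmpty.false x).elim, fun n _ x => (IsEmpty.false x).elim⟩
  obtain ⟨x₀⟩ := hX
  have hB0 : 0 ≤ B := le_trans (abs_nonneg _) (hB x₀)
  -- Part 1: induction on k
  have main : ∀ k : ℕ, 1 ≤ k → ∀ x,
      (∫ z, (∑ j ∈ Finset.range (k * n₀), φ (T^[j] z)) ∂(ν x))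
        ≤ -((k * n₀ : ℕ) : ℝ) * α / 2 := by
    intro k
    induction k with
    | zero => intro h; omega
    | succ k ih =>
      intro _ x
      haveI := hprob x
      by_cases hk : k = 0
      · subst hk
        simpa using hstep x
      have hk1 : 1 ≤ k := Nat.one_le_iff_ne_zero.mpr hk
      obtain ⟨m, c, y, hc0, hc1, hmap⟩ := hjac x
      -- splitting of the Birkhoff sum
      have hsplit : ∀ z, (∑ j ∈ Finset.range ((k + 1) * n₀), φ (T^[j] z))
          = (∑ j ∈ Finset.range n₀, φ (T^[j] z))
            + ∑ j ∈ Finset.range (k * n₀), φ (T^[j] (T^[n₀] z)) := by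
        intro z
        have he : (k + 1) * n₀ = n₀ + k * n₀ := by ring
        rw [he, Finset.sum_range_add]
        congr 1
        refine Finset.sum_congr rfl fun j _ => ?_
        rw [add_comm n₀ j, Function.iterate_add_apply]
      have hint2 : Integrable (fun z => ∑ j ∈ Finset.range (k * n₀), φ (T^[j] (T^[n₀] z)))
          (ν x) := by
        refine (integrable_const (((k * n₀ : ℕ) : ℝ) * B)).mono'
          ((stmt10_meas T hT φ hφ (k * n₀)).comp (hT.iterate n₀)).aestronglyMeasurable
          (Filter.Eventually.of_forall fun z => ?_)
        rw [Real.norm_eq_abs]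
        exact stmt10_absle T φ B hB (k * n₀) (T^[n₀] z)
      have key : (∫ z, (∑ j ∈ Finset.range (k * n₀), φ (T^[j] (T^[n₀] z))) ∂(ν x))
          ≤ -((k * n₀ : ℕ) : ℝ) * α / 2 := by
        have hchg : (∫ z, (∑ j ∈ Finset.range (k * n₀), φ (T^[j] (T^[n₀] z))) ∂(ν x))
            = ∫ w, (∑ j ∈ Finset.range (k * n₀), φ (T^[j] w)) ∂(Measure.map (T^[n₀]) (ν x)) :=
          (integral_map (hT.iterate n₀).aemeasurable
            (stmt10_meas T hT φ hφ (k * n₀)).aestronglyMeasurable).symm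
        rw [hchg, hmap, integral_finset_sum_measure (fun i _ => by
          haveI := hprob (y i)
          exact (stmt10_int T hT φ hφ B hB (k * n₀) (ν (y i)) inferInstance).smul_measure
            ENNReal.ofReal_ne_top)]
        calc ∑ i, ∫ w, (∑ j ∈ Finset.range (k * n₀), φ (T^[j] w))
                ∂(ENNReal.ofReal (c i) • ν (y i))
            = ∑ i, c i * ∫ w, (∑ j ∈ Finset.range (k * n₀), φ (T^[j] w)) ∂(ν (y i)) := by
              refine Finset.sum_congr rfl fun i _ => ?_
              rw [integral_smul_measure, ENNReal.toReal_ofReal (hc0 i), smul_eq_mul]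
          _ ≤ ∑ i, c i * (-((k * n₀ : ℕ) : ℝ) * α / 2) :=
              Finset.sum_le_sum fun i _ =>
                mul_le_mul_of_nonneg_left (ih hk1 (y i)) (hc0 i)
          _ = -((k * n₀ : ℕ) : ℝ) * α / 2 := by
              rw [← Finset.sum_mul, hc1, one_mul]
      have hadd : (∫ z, (∑ j ∈ Finset.range ((k + 1) * n₀), φ (T^[j] z)) ∂(ν x))
          = (∫ z, (∑ j ∈ Finset.range n₀, φ (T^[j] z)) ∂(ν x))
            + ∫ z, (∑ j ∈ Finset.range (k * n₀), φ (T^[j] (T^[n₀] z))) ∂(ν x) := by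
        rw [← integral_add (stmt10_int T hT φ hφ B hB n₀ (ν x) inferInstance) hint2]
        exact integral_congr_ae (Filter.Eventually.of_forall hsplit)
      rw [hadd]
      have h1 := hstep x
      have hcast : (((k + 1) * n₀ : ℕ) : ℝ) = ((k * n₀ : ℕ) : ℝ) + (n₀ : ℝ) := by
        push_cast; ring
      rw [hcast]
      linarith [key, h1]
  refine ⟨main, ?_⟩
  -- Part 2
  intro n hn x
  haveI := hprob x
  set k := n / n₀ with hkdef
  set r := n % n₀ with hrdef
  have hnkr : k * n₀ + r = n := by
    rw [hkdef, hrdef, mul_comm]; exact Nat.div_add_mod n n₀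
  have hrlt : r < n₀ := Nat.mod_lt n (by omega)
  by_cases hk : k = 0
  · -- n < n₀, use the crude bound
    have hnn0 : n < n₀ := by
      rw [hk, zero_mul, zero_add] at hnkr; omega
    have hb := stmt10_bound T φ B hB n (ν x) inferInstance
    have hnle : (n : ℝ) ≤ (n₀ : ℝ) := by exact_mod_cast hnn0.le
    have hn1 : (1 : ℝ) ≤ (n : ℝ) := by exact_mod_cast hn
    nlinarith [hb, hα.le, hB0, hnle]
  · have hk1 : 1 ≤ k := Nat.one_le_iff_ne_zero.mpr hk
    have hsplit : ∀ z, (∑ j ∈ Finset.range n, φ (T^[j] z))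
        = (∑ j ∈ Finset.range (k * n₀), φ (T^[j] z))
          + ∑ j ∈ Finset.range r, φ (T^[k * n₀ + j] z) := by
      intro z
      rw [← hnkr, Finset.sum_range_add]
    have htail_int : Integrable (fun z => ∑ j ∈ Finset.range r, φ (T^[k * n₀ + j] z))
        (ν x) := by
      refine (integrable_const ((r : ℝ) * B)).mono'
        (Finset.measurable_sum _ (fun j _ => hφ.comp (hT.iterate _))).aestronglyMeasurable
        (Filter.Eventually.of_forall fun z => ?_)
      rw [Real.norm_eq_abs]
      calc |∑ j ∈ Finset.range r, φ (T^[k * n₀ + j] z)|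
          ≤ ∑ j ∈ Finset.range r, |φ (T^[k * n₀ + j] z)| := Finset.abs_sum_le_sum_abs _ _
        _ ≤ ∑ j ∈ Finset.range r, B := Finset.sum_le_sum fun j _ => hB _
        _ = r * B := by simp [mul_comm]
    have htail : (∫ z, (∑ j ∈ Finset.range r, φ (T^[k * n₀ + j] z)) ∂(ν x)) ≤ r * B := by
      have h := norm_integral_le_of_norm_le_const (μ := ν x)
        (f := fun z => ∑ j ∈ Finset.range r, φ (T^[k * n₀ + j] z)) (C := (r : ℝ) * B)
        (Filter.Eventually.of_forall fun z => by
          rw [Real.norm_eq_abs]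
          calc |∑ j ∈ Finset.range r, φ (T^[k * n₀ + j] z)|
              ≤ ∑ j ∈ Finset.range r, |φ (T^[k * n₀ + j] z)| := Finset.abs_sum_le_sum_abs _ _
            _ ≤ ∑ j ∈ Finset.range r, B := Finset.sum_le_sum fun j _ => hB _
            _ = r * B := by simp [mul_comm])
      simp only [measure_univ, probReal_univ, ENNReal.toReal_one, mul_one, Real.norm_eq_abs] at h
      exact le_trans (le_abs_self _) h
    have hadd : (∫ z, (∑ j ∈ Finset.range n, φ (T^[j] z)) ∂(ν x))
        = (∫ z, (∑ j ∈ Finset.range (k * n₀), φ (T^[j] z)) ∂(ν x))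
          + ∫ z, (∑ j ∈ Finset.range r, φ (T^[k * n₀ + j] z)) ∂(ν x) := by
      rw [← integral_add (stmt10_int T hT φ hφ B hB (k * n₀) (ν x) inferInstance) htail_int]
      exact integral_congr_ae (Filter.Eventually.of_forall hsplit)
    have hmain := main k hk1 x
    have hcast : ((k * n₀ : ℕ) : ℝ) = (n : ℝ) - (r : ℝ) := by
      have : (n : ℝ) = ((k * n₀ : ℕ) : ℝ) + (r : ℝ) := by exact_mod_cast hnkr.symm
      linarith
    have hrle : (r : ℝ) ≤ (n₀ : ℝ) := by exact_mod_cast hrlt.le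
    have hr0 : (0 : ℝ) ≤ (r : ℝ) := Nat.cast_nonneg r
    rw [hadd]
    rw [hcast] at hmain
    nlinarith [htail, hmain, hα.le, hB0, hrle, hr0]
end
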